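/- For any ring R, the formal power series ring R[[x]] is a weakly ΔU-ring if and only if R is a weakly ΔU-ring. -/

import Mathlib

/-- `Δ(R) = {r ∈ R : r + u is a unit for every unit u}`. -/
def Delta (R : Type*) [Ring R] : Set R :=
  {r : R | ∀ u : R, IsUnit u → IsUnit (r + u)}

/-- `R` is a weakly ΔU-ring: every unit is `1 + d` or `-1 + d` with `d ∈ Δ(R)`. -/
def IsWDU (R : Type*) [Ring R] : Prop :=
  ∀ u : R, IsUnit u → ∃ d ∈ Delta R, u = 1 + d ∨ u = -1 + d

/-- `R` is a ΔU-ring: every unit is `1 + d` with `d ∈ Δ(R)`. -/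
def IsDU (R : Type*) [Ring R] : Prop :=
  ∀ u : R, IsUnit u → ∃ d ∈ Delta R, u = 1 + d

lemma delta_ps {R : Type*} [Ring R] {f : PowerSeries R}
    (h : PowerSeries.constantCoeff f ∈ Delta R) : f ∈ Delta (PowerSeries R) := by
  intro u hu
  rw [PowerSeries.isUnit_iff_constantCoeff] at hu ⊢
  rw [map_add]
  exact h _ hu

/-- `R[[x]]` is weakly ΔU iff `R` is weakly ΔU. -/
theorem stmt_18 (R : Type*) [Ring R] :
    IsWDU (PowerSeries R) ↔ IsWDU R := by
  constructor
  · intro h u hu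
    obtain ⟨d, hd, hcase⟩ := h (PowerSeries.C u)
      (by rw [PowerSeries.isUnit_iff_constantCoeff]; simpa using hu)
    refine ⟨PowerSeries.constantCoeff d, ?_, ?_⟩
    · intro v hv
      have := hd (PowerSeries.C v)
        (by rw [PowerSeries.isUnit_iff_constantCoeff]; simpa using hv)
      rw [PowerSeries.isUnit_iff_constantCoeff] at this
      simpa using this
    · rcases hcase with hc | hc <;> [left; right] <;>
        simpa using congrArg (PowerSeries.constantCoeff) hc
  · intro h f hf
    have hc : IsUnit (PowerSeries.constantCoeff f) :=
      PowerSeries.isUnit_iff_constantCoeff.mp hf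
    obtain ⟨d, hd, hcase⟩ := h _ hc
    rcases hcase with hc1 | hc1
    · refine ⟨f - 1, delta_ps ?_, Or.inl (by abel)⟩
      simpa [hc1] using hd
    · refine ⟨f + 1, delta_ps ?_, Or.inr (by abel)⟩
      have : PowerSeries.constantCoeff f + 1 = d := by rw [hc1]; abel
      simpa [this] using hd
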